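/- Suppose the two group Bayes classifiers coincide, T*_0 = T*_1 =: T̂, where T*_a = {x : p_{a,1}·f_{a,1}(x) ≥ p_{a,0}·f_{a,0}(x)}, and suppose the data unfairness vanishes, i.e., TPR_0(T*_0) = TPR_1(T*_1) and TNR_0(T*_0) = TNR_1(T*_1). Then the classifier T̂ achieves complete fairness and maximal accuracy: F_U(T̂) = 0 and Acc(T̂) ≥ Acc(T) for every classifier T. -/
import Mathlib


open MeasureTheory

/-- True positive rate of group `a` under classifier `T`: `TPR_a(T) = ∫_T f_{a,1} dν`. -/
noncomputable def tprOf {Ω : Type*} [MeasurableSpace Ω] (ν : Measure Ω)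
    (f : Bool → Bool → Ω → ℝ) (a : Bool) (T : Set Ω) : ℝ :=
  ∫ x in T, f a true x ∂ν

/-- True negative rate of group `a` under classifier `T`: `TNR_a(T) = ∫_{Tᶜ} f_{a,0} dν`. -/
noncomputable def tnrOf {Ω : Type*} [MeasurableSpace Ω] (ν : Measure Ω)
    (f : Bool → Bool → Ω → ℝ) (a : Bool) (T : Set Ω) : ℝ :=
  ∫ x in Tᶜ, f a false x ∂ν

/-- Equalized-odds unfairness. -/
noncomputable def unfairness {Ω : Type*} [MeasurableSpace Ω] (ν : Measure Ω)
    (f : Bool → Bool → Ω → ℝ) (T : Set Ω) : ℝ :=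
  (1/2) * |tprOf ν f true T - tprOf ν f false T|
    + (1/2) * |tnrOf ν f true T - tnrOf ν f false T|

/-- Accuracy of a classifier `T`. -/
noncomputable def accuracy {Ω : Type*} [MeasurableSpace Ω] (ν : Measure Ω)
    (f : Bool → Bool → Ω → ℝ) (p : Bool → Bool → ℝ) (T : Set Ω) : ℝ :=
  (1/2) * (p false true * ∫ x in T, f false true x ∂ν
      + p true true * ∫ x in T, f true true x ∂ν)
  + (1/2) * (p false false * ∫ x in Tᶜ, f false false x ∂ν
      + p true false * ∫ x in Tᶜ, f true false x ∂ν)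

/-- If the two group Bayes classifiers coincide (`T*_0 = T*_1 = T̂`) and the data
unfairness vanishes (`TPR₀(T*_0) = TPR₁(T*_1)` and `TNR₀(T*_0) = TNR₁(T*_1)`),
then `T̂` achieves complete fairness (`F_U(T̂) = 0`) and maximal accuracy. -/
theorem identical_bayes_classifiers_eliminate_tradeoff
    {Ω : Type*} [MeasurableSpace Ω] (ν : Measure Ω) [SigmaFinite ν]
    (f : Bool → Bool → Ω → ℝ) (p : Bool → Bool → ℝ)
    (hf_meas : ∀ a y, Measurable (f a y))
    (hf_nonneg : ∀ a y x, 0 ≤ f a y x)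
    (hf_int : ∀ a y, Integrable (f a y) ν)
    (hf_one : ∀ a y, ∫ x, f a y x ∂ν = 1)
    (hp_pos : ∀ a y, 0 < p a y)
    (hp_sum : p false false + p false true + p true false + p true true = 1)
    (Tstar : Bool → Set Ω)
    (hTstar : ∀ a, Tstar a = {x | p a false * f a false x ≤ p a true * f a true x})
    (That : Set Ω) (hhat0 : Tstar false = That) (hhat1 : Tstar true = That)
    (hDU_tpr : tprOf ν f false (Tstar false) = tprOf ν f true (Tstar true))
    (hDU_tnr : tnrOf ν f false (Tstar false) = tnrOf ν f true (Tstar true)) :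
    unfairness ν f That = 0 ∧
      ∀ T : Set Ω, MeasurableSet T → accuracy ν f p T ≤ accuracy ν f p That := by

  rw [hhat0] at hDU_tpr hDU_tnr
  rw [hhat1] at hDU_tpr hDU_tnr
  have h0 : That = {x | p false false * f false false x ≤ p false true * f false true x} := by
    rw [← hhat0, hTstar]
  have h1 : That = {x | p true false * f true false x ≤ p true true * f true true x} := by
    rw [← hhat1, hTstar]
  have hThat_meas : MeasurableSet That := by
    rw [h0]
    exact measurableSet_le ((hf_meas false false).const_mul _)
      ((hf_meas false true).const_mul _)
  constructor
  · unfold unfairness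
    rw [hDU_tpr, hDU_tnr]
    simp
  · set G : Ω → ℝ := fun x =>
      (p false true * f false true x - p false false * f false false x)
      + (p true true * f true true x - p true false * f true false x) with hG
    have hGint : Integrable G ν := by
      exact (((hf_int false true).const_mul _).sub ((hf_int false false).const_mul _)).add
        (((hf_int true true).const_mul _).sub ((hf_int true false).const_mul _))
    have hGpos : ∀ x ∈ That, 0 ≤ G x := by
      intro x hx
      have hx0 : p false false * f false false x ≤ p false true * f false true x := by
        rw [h0] at hx; exact hx
      have hx1 : p true false * f true false x ≤ p true true * f true true x := by
        rw [h1] at hx; exact hx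
      simp only [hG]; linarith
    have hGneg : ∀ x ∈ Thatᶜ, G x ≤ 0 := by
      intro x hx
      have hx0 : ¬ p false false * f false false x ≤ p false true * f false true x := by
        rw [h0] at hx; exact hx
      have hx1 : ¬ p true false * f true false x ≤ p true true * f true true x := by
        rw [h1] at hx; exact hx
      simp only [hG]; push_neg at hx0 hx1; linarith
    have hcompl : ∀ (a : Bool) (S : Set Ω), MeasurableSet S →
        ∫ x in Sᶜ, f a false x ∂ν = 1 - ∫ x in S, f a false x ∂ν := by
      intro a S hS
      have h := integral_add_compl hS (hf_int a false)
      rw [hf_one a false] at h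
      linarith
    have hsplit : ∀ (S : Set Ω), MeasurableSet S →
        ∫ x in S, G x ∂ν =
          p false true * (∫ x in S, f false true x ∂ν)
          - p false false * (∫ x in S, f false false x ∂ν)
          + (p true true * (∫ x in S, f true true x ∂ν)
          - p true false * (∫ x in S, f true false x ∂ν)) := by
      intro S hS
      have iA : IntegrableOn (fun x =>
          p false true * f false true x - p false false * f false false x) S ν := by
        exact (((hf_int false true).const_mul _).sub
          ((hf_int false false).const_mul _)).integrableOn
      have iB : IntegrableOn (fun x =>
          p true true * f true true x - p true false * f true false x) S ν := by
        exact (((hf_int true true).const_mul _).sub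
          ((hf_int true false).const_mul _)).integrableOn
      rw [show (∫ x in S, G x ∂ν) = ∫ x in S,
          ((p false true * f false true x - p false false * f false false x)
          + (p true true * f true true x - p true false * f true false x)) ∂ν from rfl,
        integral_add iA iB,
        integral_sub (((hf_int false true).const_mul _).integrableOn)
          (((hf_int false false).const_mul _).integrableOn),
        integral_sub (((hf_int true true).const_mul _).integrableOn)
          (((hf_int true false).const_mul _).integrableOn),
        integral_const_mul, integral_const_mul, integral_const_mul, integral_const_mul]
    have hacc : ∀ (S : Set Ω), MeasurableSet S →
        accuracy ν f p S = (1/2) * (p false false + p true false)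
          + (1/2) * ∫ x in S, G x ∂ν := by
      intro S hS
      unfold accuracy
      rw [hcompl false S hS, hcompl true S hS, hsplit S hS]
      ring
    intro T hT
    rw [hacc T hT, hacc That hThat_meas]
    have hkey : ∫ x in T, G x ∂ν ≤ ∫ x in That, G x ∂ν := by
      have e1 : ∫ x in T, G x ∂ν
          = ∫ x in T ∩ That, G x ∂ν + ∫ x in T \ That, G x ∂ν :=
        (integral_inter_add_diff hThat_meas hGint.integrableOn).symm
      have e2 : ∫ x in That, G x ∂ν
          = ∫ x in That ∩ T, G x ∂ν + ∫ x in That \ T, G x ∂ν :=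
        (integral_inter_add_diff hT hGint.integrableOn).symm
      have h3 : ∫ x in T \ That, G x ∂ν ≤ 0 :=
        setIntegral_nonpos (hT.diff hThat_meas)
          (fun x hx => hGneg x hx.2)
      have h4 : 0 ≤ ∫ x in That \ T, G x ∂ν :=
        setIntegral_nonneg (hThat_meas.diff hT)
          (fun x hx => hGpos x hx.1)
      rw [Set.inter_comm T That] at e1
      linarith
    linarith
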